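/- For all z in the upper half-plane ℍ: (1/(δ·|z|²))·I1(z, z̄)·I2(z, z̄) < 1. Consequently, |m1(z)|²·I1(z, z̄) < 1/δ, |m2(z)|²·I2(z, z̄) < δ, and |z·m(z) + 1| ≤ √δ. -/

import Mathlib

open MeasureTheory ProbabilityTheory Filter Topology
open scoped ENNReal NNReal

noncomputable section

namespace SpecGLM

/-- The (topological) support of a measure on `ℝ`. -/
def msupport (μ : Measure ℝ) : Set ℝ := {x | ∀ U ∈ nhds x, μ U ≠ 0}

/-- `k`-th largest eigenvalue (1-indexed) of a real symmetric matrix; junk value `0`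
if the matrix is not symmetric. -/
def lambdaK {d : ℕ} (A : Matrix (Fin d) (Fin d) ℝ) (k : ℕ) : ℝ := by
  classical
  exact if hA : A.IsHermitian then
    (((List.ofFn hA.eigenvalues).insertionSort (· ≥ ·)).getD (k - 1) 0)
  else 0

/-- Empirical distribution of a finite family of real numbers. -/
def esdVec {n : ℕ} (v : Fin n → ℝ) : Measure ℝ :=
  (n : ℝ≥0∞)⁻¹ • ∑ i, Measure.dirac (v i)

/-- Empirical spectral distribution of a real symmetric matrix. -/
def esd {d : ℕ} (A : Matrix (Fin d) (Fin d) ℝ) : Measure ℝ := by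
  classical
  exact if hA : A.IsHermitian then esdVec hA.eigenvalues else 0

/-- Weak convergence of a sequence of measures on `ℝ`. -/
def WeakTendsto (ν : ℕ → Measure ℝ) (ν' : Measure ℝ) : Prop :=
  ∀ f : BoundedContinuousFunction ℝ ℝ,
    Tendsto (fun k => ∫ x, f x ∂(ν k)) atTop (𝓝 (∫ x, f x ∂ν'))

/-- Convergence in probability of a sequence of real random variables to a constant. -/
def TendstoInProbability {Ω : Type*} [MeasurableSpace Ω] (μ : Measure Ω)
    (X : ℕ → Ω → ℝ) (c : ℝ) : Prop :=
  ∀ ε : ℝ, 0 < ε → Tendsto (fun k => μ {ω | ε ≤ |X k ω - c|}) atTop (𝓝 0)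

/-- Almost sure convergence of a sequence of real random variables to a constant. -/
def TendstoAlmostSurely {Ω : Type*} [MeasurableSpace Ω] (μ : Measure Ω)
    (X : ℕ → Ω → ℝ) (c : ℝ) : Prop :=
  ∀ᵐ ω ∂μ, Tendsto (fun k => X k ω) atTop (𝓝 c)

/-- Pseudo-Lipschitz functions of finite order. -/
def PseudoLipschitz (f : ℝ → ℝ) : Prop :=
  ∃ (j : ℕ) (L : ℝ), ∀ x y : ℝ,
    |f x - f y| ≤ L * |x - y| * (1 + |x| ^ (j - 1) + |y| ^ (j - 1))

/-- A finite family of real random variables is i.i.d. with common law `ν`. -/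
def IIDLaw {Ω : Type*} [MeasurableSpace Ω] (μ : Measure Ω) {ι : Type*} [Fintype ι]
    (f : ι → Ω → ℝ) (ν : Measure ℝ) : Prop :=
  (∀ i, Measurable (f i)) ∧ (∀ i, Measure.map (f i) μ = ν) ∧
    iIndepFun f μ

/-- The positive semidefinite square root of a matrix (junk value `0` if not psd). -/
def sqrtMat {d : ℕ} (A : Matrix (Fin d) (Fin d) ℝ) : Matrix (Fin d) (Fin d) ℝ := by
  classical
  exact if hA : A.PosSemidef then
    (hA.1.eigenvectorUnitary : Matrix (Fin d) (Fin d) ℝ) *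
      Matrix.diagonal ((↑) ∘ Real.sqrt ∘ hA.1.eigenvalues) *
      (star hA.1.eigenvectorUnitary : Matrix (Fin d) (Fin d) ℝ)
  else 0

/-- Euclidean norm of a vector. -/
def vnorm {d : ℕ} (v : Fin d → ℝ) : ℝ := Real.sqrt (∑ i, v i ^ 2)

/-- Euclidean inner product. -/
def dot {d : ℕ} (u v : Fin d → ℝ) : ℝ := ∑ i, u i * v i

/-- A probability space bundled as a structure. -/
structure ProbSpace where
  carrier : Type
  inst : MeasurableSpace carrier
  meas : @Measure carrier inst
  prob : @IsProbabilityMeasure carrier inst meas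

attribute [instance] ProbSpace.inst ProbSpace.prob

end SpecGLM
namespace SpecGLM

/-- The complex upper half-plane. -/
def UH : Set ℂ := {z | 0 < z.im}

/-- Meromorphy at a point: some power of `(· - z)` times `f` is analytic at `z`. -/
def MeroAt (f : ℂ → ℂ) (z : ℂ) : Prop :=
  ∃ k : ℕ, AnalyticAt ℂ (fun w => (w - z) ^ k * f w) z

/-- Data for the deterministic random-matrix system: aspect ratio and the limiting
spectral distributions `μ_T`, `μ_Σ`. -/
structure RMT where
  delta : ℝ
  muT : Measure ℝ
  muS : Measure ℝ

namespace RMT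

variable (R : RMT)

/-- `sup supp μ_T`. -/
def tauT : ℝ := sSup (msupport R.muT)

/-- `sup supp μ_Σ`. -/
def sSig : ℝ := sSup (msupport R.muS)

/-- `inf supp μ_Σ`. -/
def iSig : ℝ := sInf (msupport R.muS)

/-- `∫ s dμ_Σ(s)`. -/
def meanS : ℝ := ∫ s, s ∂(R.muS)

/-- `c(a) = ∫ t/(a - t) dμ_T(t)`. -/
def cfun (a : ℝ) : ℝ := ∫ t, t / (a - t) ∂(R.muT)

/-- The left end `s(a)` of the admissible interval for `γ(a)`. -/
def sfun (a : ℝ) : ℝ :=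
  if 0 < R.cfun a then R.cfun a * R.sSig
  else if R.cfun a < 0 then R.cfun a * R.iSig else 0

/-- `γ(a)` is the unique solution in `(s(a), ∞)` of
`1 = (1/δ) ∫ s/(γ(a) - c(a)s) dμ_Σ(s)`. -/
def IsGammaFun (γ : ℝ → ℝ) : Prop :=
  ∀ a, R.tauT < a →
    R.sfun a < γ a ∧ 1 = (1 / R.delta) * ∫ s, s / (γ a - R.cfun a * s) ∂(R.muS) ∧
      ∀ g, R.sfun a < g →
        1 = (1 / R.delta) * ∫ s, s / (g - R.cfun a * s) ∂(R.muS) → g = γ a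

/-- Basic assumptions on the data. -/
def Basic : Prop :=
  0 < R.delta ∧ IsProbabilityMeasure R.muT ∧ IsProbabilityMeasure R.muS ∧
    (∃ C : ℝ, msupport R.muT ⊆ Set.Icc (-C) C) ∧
    (∃ l u : ℝ, 0 < l ∧ msupport R.muS ⊆ Set.Icc l u) ∧
    R.muT ≠ Measure.dirac 0 ∧ R.muS ≠ Measure.dirac 0 ∧ 0 < R.tauT

/-- Thick-edge assumptions. -/
def ThickEdge : Prop :=
  Tendsto (fun a => ∫ t, t / (a - t) ∂(R.muT)) (𝓝[>] R.tauT) atTop ∧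
  Tendsto (fun a => ∫ t, t ^ 2 / (a - t) ^ 2 ∂(R.muT)) (𝓝[>] R.tauT) atTop ∧
  Tendsto (fun w => |∫ s, s / (s - w) ∂(R.muS)|) (𝓝[>] R.sSig) atTop ∧
  Tendsto (fun w => ∫ s, s ^ 2 / (s - w) ^ 2 ∂(R.muS)) (𝓝[>] R.sSig) atTop ∧
  Tendsto (fun w => ∫ s, s ^ 3 / (s - w) ^ 2 ∂(R.muS)) (𝓝[>] R.sSig) atTop ∧
  Tendsto (fun w => |∫ s, s / (s - w) ∂(R.muS)|) (𝓝[<] R.iSig) atTop ∧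
  Tendsto (fun w => ∫ s, s ^ 2 / (s - w) ^ 2 ∂(R.muS)) (𝓝[<] R.iSig) atTop ∧
  Tendsto (fun w => ∫ s, s ^ 3 / (s - w) ^ 2 ∂(R.muS)) (𝓝[<] R.iSig) atTop

/-- The system of equations satisfied by `(m(z), m₁(z), m₂(z))` at `z`. -/
def SystemEqAt (z w w1 w2 : ℂ) : Prop :=
  (-(z * w) = (1 - (R.delta : ℂ)) +
      (R.delta : ℂ) * ∫ t, (1 + w1 * (t : ℂ))⁻¹ ∂(R.muT)) ∧
  (-(z * w) = ∫ s, (1 + w2 * (s : ℂ))⁻¹ ∂(R.muS)) ∧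
  (-(z * w) = 1 + (R.delta : ℂ) * z * w1 * w2)

/-- `(m, m₁, m₂)` is the (unique) solution of the system, subject to
`m(z) ∈ ℍ`, `m₁(z) ∈ ℍ`, `z m₂(z) ∈ ℍ`. -/
def IsSystemSolution (m m1 m2 : ℂ → ℂ) : Prop :=
  ∀ z ∈ UH,
    m z ∈ UH ∧ m1 z ∈ UH ∧ z * m2 z ∈ UH ∧ R.SystemEqAt z (m z) (m1 z) (m2 z) ∧
    ∀ w w1 w2 : ℂ, w ∈ UH → w1 ∈ UH → z * w2 ∈ UH → R.SystemEqAt z w w1 w2 →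
      w = m z ∧ w1 = m1 z ∧ w2 = m2 z

/-- `I₁(z, z̄) = ∫ t²/|1 + m₁(z)t|² dμ_T(t)`. -/
def I1sq (m1 : ℂ → ℂ) (z : ℂ) : ℝ :=
  ∫ t, t ^ 2 / Complex.normSq (1 + m1 z * (t : ℂ)) ∂(R.muT)

/-- `I₂(z, z̄) = ∫ s²/|1 + m₂(z)s|² dμ_Σ(s)`. -/
def I2sq (m2 : ℂ → ℂ) (z : ℂ) : ℝ :=
  ∫ s, s ^ 2 / Complex.normSq (1 + m2 z * (s : ℂ)) ∂(R.muS)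

end RMT

/-- `m` is the Stieltjes transform of the measure `ν` on `ℝ`. -/
def IsStieltjesOf (ν : Measure ℝ) (m : ℂ → ℂ) : Prop :=
  ∀ z ∈ UH, m z = ∫ x, ((x : ℂ) - z)⁻¹ ∂ν

end SpecGLM
namespace SpecGLM

lemma msupport_compl_null (μ : Measure ℝ) : μ (msupport μ)ᶜ = 0 := by
  have hsub : (msupport μ)ᶜ ⊆ ⋃₀ {U : Set ℝ | IsOpen U ∧ μ U = 0} := by
    intro x hx
    simp only [msupport, Set.mem_compl_iff, Set.mem_setOf_eq, not_forall] at hx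
    obtain ⟨V, hV, hVnull⟩ := hx
    obtain ⟨U, hUV, hUopen, hxU⟩ := mem_nhds_iff.mp hV
    exact ⟨U, ⟨hUopen, measure_mono_null hUV (not_not.mp hVnull)⟩, hxU⟩
  obtain ⟨T, hTc, hTsub, hTeq⟩ :=
    TopologicalSpace.isOpen_sUnion_countable {U : Set ℝ | IsOpen U ∧ μ U = 0}
      (fun U hU => hU.1)
  refine measure_mono_null (hsub.trans hTeq.symm.subset) ?_
  exact (measure_sUnion_null_iff hTc).mpr fun U hU => (hTsub hU).2

lemma sq_integral_le {μ : Measure ℝ} [IsProbabilityMeasure μ] {g : ℝ → ℝ}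
    (hg : Integrable g μ) (hg2 : Integrable (fun x => g x ^ 2) μ) :
    (∫ x, g x ∂μ) ^ 2 ≤ ∫ x, g x ^ 2 ∂μ := by
  set c := ∫ x, g x ∂μ with hc
  have h1 : Integrable (fun x => (2 * c) * g x) μ := hg.const_mul _
  have h2 : Integrable (fun x => g x ^ 2 - (2 * c) * g x) μ := hg2.sub h1
  have h0 : (0:ℝ) ≤ ∫ x, (g x - c) ^ 2 ∂μ := integral_nonneg fun x => sq_nonneg _
  have hrw : ∫ x, (g x - c) ^ 2 ∂μ
      = ∫ x, (g x ^ 2 - (2 * c) * g x + c ^ 2) ∂μ := by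
    congr 1; funext x; ring
  rw [hrw, integral_add h2 (integrable_const _), integral_sub hg2 h1,
    integral_const_mul, integral_const, probReal_univ] at h0
  simp only [one_smul] at h0
  nlinarith [h0]

lemma im_gT (w : ℂ) (t : ℝ) :
    ((t:ℂ) / (1 + w * t)).im = -(w.im) * (t ^ 2 / Complex.normSq (1 + w * t)) := by
  rw [Complex.div_im]
  simp only [Complex.add_im, Complex.add_re, Complex.one_im, Complex.one_re,
    Complex.mul_im, Complex.mul_re, Complex.ofReal_re, Complex.ofReal_im]
  ring

lemma im_conj_gS (z w : ℂ) (s : ℝ) :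
    ((starRingEnd ℂ z) * ((s:ℂ) / (1 + w * s))).im
      = -(z.im * (s / Complex.normSq (1 + w * s))
          + (z * w).im * (s ^ 2 / Complex.normSq (1 + w * s))) := by
  rw [mul_div_assoc', Complex.div_im]
  simp only [Complex.add_im, Complex.add_re, Complex.one_im, Complex.one_re,
    Complex.mul_im, Complex.mul_re, Complex.ofReal_re, Complex.ofReal_im,
    Complex.conj_re, Complex.conj_im]
  ring

lemma inv_sub_one (w : ℂ) (t : ℝ) (h : 1 + w * t ≠ 0) :
    (1 + w * (t:ℂ))⁻¹ - 1 = -w * ((t:ℂ) / (1 + w * t)) := by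
  field_simp
  ring

lemma norm_gS_sq (w : ℂ) (s : ℝ) :
    ‖(s:ℂ) / (1 + w * s)‖ ^ 2 = s ^ 2 / Complex.normSq (1 + w * s) := by
  rw [norm_div, div_pow, Complex.norm_real, Complex.sq_norm, Real.norm_eq_abs, sq_abs]

set_option maxHeartbeats 2000000 in
/-- **Lemma (stability bound).** For all `z` in the upper half-plane,
`(1/(δ|z|²)) I₁(z,z̄) I₂(z,z̄) < 1`; consequently `|m₁(z)|² I₁(z,z̄) < 1/δ`,
`|m₂(z)|² I₂(z,z̄) < δ`, and `|z m(z) + 1| ≤ √δ`. -/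
theorem stability_bound
    (R : RMT) (hB : R.Basic)
    (m m1 m2 : ℂ → ℂ) (hsol : R.IsSystemSolution m m1 m2) :
    ∀ z ∈ UH,
      (1 / (R.delta * Complex.normSq z)) * R.I1sq m1 z * R.I2sq m2 z < 1 ∧
      Complex.normSq (m1 z) * R.I1sq m1 z < 1 / R.delta ∧
      Complex.normSq (m2 z) * R.I2sq m2 z < R.delta ∧
      ‖z * m z + 1‖ ≤ Real.sqrt R.delta := by
  intro z hz
  simp only [RMT.I1sq, RMT.I2sq]
  obtain ⟨hδ, hPT, hPS, ⟨C, hCsub⟩, ⟨l, u, hl, hSsub⟩, -, -, -⟩ := hB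
  haveI := hPT; haveI := hPS
  obtain ⟨hmUH, hm1UH, hm2UH, ⟨e1, e2, e3⟩, -⟩ := hsol z hz
  set a := m z with ha_def
  set a1 := m1 z with ha1_def
  set a2 := m2 z with ha2_def
  have hη : 0 < z.im := hz
  have hx : 0 < a1.im := hm1UH
  have hy : 0 < (z * a2).im := hm2UH
  have hz0 : z ≠ 0 := fun h => by simp [h] at hη
  have hnqz : 0 < Complex.normSq z := Complex.normSq_pos.mpr hz0
  have ha1ne : a1 ≠ 0 := fun h => by simp [h] at hx
  have ha2ne : a2 ≠ 0 := fun h => by simp [h] at hy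
  have hδC : (R.delta : ℂ) ≠ 0 := Complex.ofReal_ne_zero.mpr (ne_of_gt hδ)
  have hTae : ∀ᵐ t ∂(R.muT), t ∈ Set.Icc (-C) C := by
    rw [Filter.eventually_iff, mem_ae_iff]
    refine measure_mono_null (fun t ht => ?_) (msupport_compl_null R.muT)
    exact fun hmem => ht (hCsub hmem)
  have hSae : ∀ᵐ s ∂(R.muS), s ∈ Set.Icc l u := by
    rw [Filter.eventually_iff, mem_ae_iff]
    refine measure_mono_null (fun s hs => ?_) (msupport_compl_null R.muS)
    exact fun hmem => hs (hSsub hmem)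
  have hCC : -C ≤ C := by
    by_contra h
    rw [Set.Icc_eq_empty h] at hTae
    simp only [Set.mem_empty_iff_false] at hTae
    have h0 : R.muT Set.univ = 0 := by simpa [ae_iff] using hTae
    rw [measure_univ] at h0; exact one_ne_zero h0
  have hlu : l ≤ u := by
    by_contra h
    rw [Set.Icc_eq_empty h] at hSae
    simp only [Set.mem_empty_iff_false] at hSae
    have h0 : R.muS Set.univ = 0 := by simpa [ae_iff] using hSae
    rw [measure_univ] at h0; exact one_ne_zero h0
  have hu : 0 < u := lt_of_lt_of_le hl hlu
  have hC0 : 0 ≤ C := by linarith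
  have hd1 : ∀ t : ℝ, 1 + a1 * (t:ℂ) ≠ 0 := by
    intro t h
    have him := congrArg Complex.im h
    simp only [Complex.add_im, Complex.one_im, Complex.mul_im, Complex.ofReal_re,
      Complex.ofReal_im, Complex.zero_im, mul_zero, add_zero, zero_add] at him
    rcases mul_eq_zero.mp him with h' | h'
    · exact absurd h' (ne_of_gt hx)
    · rw [h'] at h; simp at h
  have him2 : ∀ s : ℝ, (z * (1 + a2 * (s:ℂ))).im = z.im + (z * a2).im * s := by
    intro s
    have hrw : z * (1 + a2 * (s:ℂ)) = z + (z * a2) * (s:ℂ) := by ring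
    rw [hrw]
    simp [Complex.add_im, Complex.mul_im, Complex.ofReal_re, Complex.ofReal_im]
  have hd2 : ∀ s : ℝ, 0 ≤ s → 1 + a2 * (s:ℂ) ≠ 0 := by
    intro s hs h
    have h2 := him2 s
    rw [h, mul_zero] at h2
    simp only [Complex.zero_im] at h2
    nlinarith [mul_nonneg (le_of_lt hy) hs]
  set ε2 : ℝ := z.im / ‖z‖ with hε2_def
  have hε2 : 0 < ε2 := div_pos hη ((norm_pos_iff.mpr hz0))
  have habs2 : ∀ s : ℝ, 0 ≤ s → ε2 ≤ ‖1 + a2 * (s:ℂ)‖ := by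
    intro s hs
    have h1 : z.im ≤ ‖z‖ * ‖1 + a2 * (s:ℂ)‖ := by
      calc z.im ≤ z.im + (z * a2).im * s := by nlinarith [mul_nonneg (le_of_lt hy) hs]
        _ = (z * (1 + a2 * (s:ℂ))).im := (him2 s).symm
        _ ≤ |(z * (1 + a2 * (s:ℂ))).im| := le_abs_self _
        _ ≤ ‖z * (1 + a2 * (s:ℂ))‖ := Complex.abs_im_le_norm _
        _ = ‖z‖ * ‖1 + a2 * (s:ℂ)‖ := norm_mul _ _
    rw [hε2_def, div_le_iff₀ ((norm_pos_iff.mpr hz0))]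
    linarith [h1]
  have hcont : ContinuousOn (fun t : ℝ => ‖1 + a1 * (t:ℂ)‖)
      (Set.Icc (-C) C) :=
    (continuous_norm.comp (by continuity)).continuousOn
  obtain ⟨t0, ht0mem, ht0min⟩ :=
    isCompact_Icc.exists_isMinOn (Set.nonempty_Icc.mpr hCC) hcont
  set ε1 : ℝ := ‖1 + a1 * (t0:ℂ)‖ with hε1_def
  have hε1 : 0 < ε1 := norm_pos_iff.mpr (hd1 t0)
  have habs1 : ∀ t ∈ Set.Icc (-C) C, ε1 ≤ ‖1 + a1 * (t:ℂ)‖ :=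
    fun t ht => ht0min ht
  have mes1 : Measurable fun t : ℝ => 1 + a1 * (t:ℂ) :=
    measurable_const.add (Complex.measurable_ofReal.const_mul a1)
  have mes2 : Measurable fun s : ℝ => 1 + a2 * (s:ℂ) :=
    measurable_const.add (Complex.measurable_ofReal.const_mul a2)
  have mnq1 : Measurable fun t : ℝ => Complex.normSq (1 + a1 * (t:ℂ)) :=
    Complex.continuous_normSq.measurable.comp mes1
  have mnq2 : Measurable fun s : ℝ => Complex.normSq (1 + a2 * (s:ℂ)) :=
    Complex.continuous_normSq.measurable.comp mes2
  have hfTi : Integrable (fun t : ℝ => (1 + a1 * (t:ℂ))⁻¹) R.muT := by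
    refine Integrable.mono' (integrable_const (ε1⁻¹)) mes1.inv.aestronglyMeasurable ?_
    refine hTae.mono fun t ht => ?_
    simp only [norm_inv]
    exact inv_anti₀ hε1 (habs1 t ht)
  have hgTi : Integrable (fun t : ℝ => (t:ℂ) / (1 + a1 * (t:ℂ))) R.muT := by
    refine Integrable.mono' (integrable_const (C / ε1))
      (Complex.measurable_ofReal.div mes1).aestronglyMeasurable ?_
    refine hTae.mono fun t ht => ?_
    simp only [norm_div, Complex.norm_real, Real.norm_eq_abs]
    exact div_le_div₀ hC0 (abs_le.mpr ⟨ht.1, ht.2⟩) hε1 (habs1 t ht)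
  have hnq1le : ∀ t ∈ Set.Icc (-C) C,
      ε1 ^ 2 ≤ Complex.normSq (1 + a1 * (t:ℂ)) := by
    intro t ht
    rw [← Complex.sq_norm]
    exact pow_le_pow_left₀ (le_of_lt hε1) (habs1 t ht) 2
  have hITi : Integrable (fun t : ℝ => t ^ 2 / Complex.normSq (1 + a1 * (t:ℂ))) R.muT := by
    refine Integrable.mono' (integrable_const (C ^ 2 / ε1 ^ 2))
      ((measurable_id.pow_const 2).div mnq1).aestronglyMeasurable ?_
    refine hTae.mono fun t ht => ?_
    rw [Real.norm_eq_abs, abs_of_nonneg (div_nonneg (sq_nonneg t) (Complex.normSq_nonneg _))]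
    exact div_le_div₀ (sq_nonneg C) (sq_le_sq' (by linarith [ht.1]) ht.2)
      (pow_pos hε1 2) (hnq1le t ht)
  have hs0 : ∀ s : ℝ, s ∈ Set.Icc l u → (0:ℝ) ≤ s := fun s hs => le_trans hl.le hs.1
  have hsabs : ∀ s : ℝ, s ∈ Set.Icc l u → |s| ≤ u := fun s hs =>
    abs_le.mpr ⟨by linarith [hs.1, hl], hs.2⟩
  have hnq2le : ∀ s : ℝ, s ∈ Set.Icc l u →
      ε2 ^ 2 ≤ Complex.normSq (1 + a2 * (s:ℂ)) := by
    intro s hs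
    rw [← Complex.sq_norm]
    exact pow_le_pow_left₀ (le_of_lt hε2) (habs2 s (hs0 s hs)) 2
  have hfSi : Integrable (fun s : ℝ => (1 + a2 * (s:ℂ))⁻¹) R.muS := by
    refine Integrable.mono' (integrable_const (ε2⁻¹)) mes2.inv.aestronglyMeasurable ?_
    refine hSae.mono fun s hs => ?_
    simp only [norm_inv]
    exact inv_anti₀ hε2 (habs2 s (hs0 s hs))
  have hgSi : Integrable (fun s : ℝ => (s:ℂ) / (1 + a2 * (s:ℂ))) R.muS := by
    refine Integrable.mono' (integrable_const (u / ε2))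
      (Complex.measurable_ofReal.div mes2).aestronglyMeasurable ?_
    refine hSae.mono fun s hs => ?_
    simp only [norm_div, Complex.norm_real, Real.norm_eq_abs]
    exact div_le_div₀ (le_of_lt hu) (hsabs s hs) hε2 (habs2 s (hs0 s hs))
  have hISi : Integrable (fun s : ℝ => s ^ 2 / Complex.normSq (1 + a2 * (s:ℂ))) R.muS := by
    refine Integrable.mono' (integrable_const (u ^ 2 / ε2 ^ 2))
      ((measurable_id.pow_const 2).div mnq2).aestronglyMeasurable ?_
    refine hSae.mono fun s hs => ?_
    rw [Real.norm_eq_abs, abs_of_nonneg (div_nonneg (sq_nonneg s) (Complex.normSq_nonneg _))]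
    exact div_le_div₀ (sq_nonneg u) (sq_le_sq' (by linarith [hs.1, hl, hu]) hs.2)
      (pow_pos hε2 2) (hnq2le s hs)
  have hJSi : Integrable (fun s : ℝ => s / Complex.normSq (1 + a2 * (s:ℂ))) R.muS := by
    refine Integrable.mono' (integrable_const (u / ε2 ^ 2))
      (measurable_id.div mnq2).aestronglyMeasurable ?_
    refine hSae.mono fun s hs => ?_
    rw [Real.norm_eq_abs, abs_of_nonneg (div_nonneg (hs0 s hs) (Complex.normSq_nonneg _))]
    exact div_le_div₀ (le_of_lt hu) hs.2 (pow_pos hε2 2) (hnq2le s hs)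
  -- shorthand for the main integrals
  set I1 : ℝ := ∫ t, t ^ 2 / Complex.normSq (1 + a1 * (t:ℂ)) ∂(R.muT) with hI1_def
  set I2 : ℝ := ∫ s, s ^ 2 / Complex.normSq (1 + a2 * (s:ℂ)) ∂(R.muS) with hI2_def
  set J2 : ℝ := ∫ s, s / Complex.normSq (1 + a2 * (s:ℂ)) ∂(R.muS) with hJ2_def
  have hI1nn : 0 ≤ I1 :=
    integral_nonneg fun t => div_nonneg (sq_nonneg t) (Complex.normSq_nonneg _)
  have hI2nn : 0 ≤ I2 :=
    integral_nonneg fun s => div_nonneg (sq_nonneg s) (Complex.normSq_nonneg _)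
  -- star 1 : ∫ gT = -(z a2)
  have hintT1 : ∫ t, ((1 + a1 * (t:ℂ))⁻¹ - 1) ∂(R.muT)
      = (∫ t, (1 + a1 * (t:ℂ))⁻¹ ∂(R.muT)) - 1 := by
    rw [integral_sub hfTi (integrable_const 1), integral_const, probReal_univ,
      one_smul]
  have hTsubst : ∫ t, ((1 + a1 * (t:ℂ))⁻¹ - 1) ∂(R.muT)
      = -a1 * ∫ t, (t:ℂ) / (1 + a1 * (t:ℂ)) ∂(R.muT) := by
    rw [← integral_const_mul]
    exact integral_congr_ae (Filter.Eventually.of_forall fun t => inv_sub_one a1 t (hd1 t))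
  have hA : (∫ t, (1 + a1 * (t:ℂ))⁻¹ ∂(R.muT)) - 1 = z * a1 * a2 := by
    have h := e1.symm.trans e3
    have h2 : (R.delta : ℂ) * ((∫ t, (1 + a1 * (t:ℂ))⁻¹ ∂(R.muT)) - 1)
        = R.delta * (z * a1 * a2) := by linear_combination h
    exact mul_left_cancel₀ hδC h2
  have hstar1 : ∫ t, (t:ℂ) / (1 + a1 * (t:ℂ)) ∂(R.muT) = -(z * a2) := by
    have hstep : -a1 * (∫ t, (t:ℂ) / (1 + a1 * (t:ℂ)) ∂(R.muT)) = z * a1 * a2 := by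
      rw [← hTsubst, hintT1]; exact hA
    have h2 := mul_left_cancel₀ ha1ne
      (show a1 * (-(∫ t, (t:ℂ) / (1 + a1 * (t:ℂ)) ∂(R.muT))) = a1 * (z * a2) by
        linear_combination hstep)
    linear_combination -h2
  -- star 2 : ∫ gS = -(δ z a1)
  have hintS1 : ∫ s, ((1 + a2 * (s:ℂ))⁻¹ - 1) ∂(R.muS)
      = (∫ s, (1 + a2 * (s:ℂ))⁻¹ ∂(R.muS)) - 1 := by
    rw [integral_sub hfSi (integrable_const 1), integral_const, probReal_univ,
      one_smul]
  have hSsubst : ∫ s, ((1 + a2 * (s:ℂ))⁻¹ - 1) ∂(R.muS)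
      = -a2 * ∫ s, (s:ℂ) / (1 + a2 * (s:ℂ)) ∂(R.muS) := by
    rw [← integral_const_mul]
    exact integral_congr_ae (hSae.mono fun s hs => inv_sub_one a2 s (hd2 s (hs0 s hs)))
  have hB2 : (∫ s, (1 + a2 * (s:ℂ))⁻¹ ∂(R.muS)) - 1 = R.delta * z * a1 * a2 := by
    have h := e2.symm.trans e3
    linear_combination h
  have hstar2 : ∫ s, (s:ℂ) / (1 + a2 * (s:ℂ)) ∂(R.muS) = -((R.delta:ℂ) * z * a1) := by
    have hstep : -a2 * (∫ s, (s:ℂ) / (1 + a2 * (s:ℂ)) ∂(R.muS)) = R.delta * z * a1 * a2 := by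
      rw [← hSsubst, hintS1]; exact hB2
    have h2 := mul_left_cancel₀ ha2ne
      (show a2 * (-(∫ s, (s:ℂ) / (1 + a2 * (s:ℂ)) ∂(R.muS))) = a2 * ((R.delta:ℂ) * z * a1) by
        linear_combination hstep)
    linear_combination -h2
  -- imaginary part of star 1 : (z a2).im = a1.im * I1
  have hyI1 : (z * a2).im = a1.im * I1 := by
    have h1 : ∫ t, ((t:ℂ) / (1 + a1 * (t:ℂ))).im ∂(R.muT) = (-(z * a2)).im := by
      rw [← hstar1]; exact integral_im hgTi
    have h2 : ∫ t, ((t:ℂ) / (1 + a1 * (t:ℂ))).im ∂(R.muT) = -(a1.im) * I1 := by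
      rw [hI1_def, ← integral_const_mul]
      exact integral_congr_ae (Filter.Eventually.of_forall fun t => im_gT a1 t)
    rw [h2, Complex.neg_im] at h1
    linarith [h1]
  -- imaginary part of conj z * star 2
  have hKey : z.im * J2 + (z * a2).im * I2 = R.delta * Complex.normSq z * a1.im := by
    have hstar2' : ∫ s, (starRingEnd ℂ z) * ((s:ℂ) / (1 + a2 * (s:ℂ))) ∂(R.muS)
        = -((R.delta:ℂ) * ((Complex.normSq z : ℝ):ℂ) * a1) := by
      rw [integral_const_mul, hstar2]
      have hzz : (starRingEnd ℂ z) * z = ((Complex.normSq z : ℝ):ℂ) := by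
        rw [mul_comm, Complex.mul_conj]
      linear_combination (-(R.delta:ℂ) * a1) * hzz
    have h1 : ∫ s, ((starRingEnd ℂ z) * ((s:ℂ) / (1 + a2 * (s:ℂ)))).im ∂(R.muS)
        = -(R.delta * Complex.normSq z * a1.im) := by
      rw [show ∫ s, ((starRingEnd ℂ z) * ((s:ℂ) / (1 + a2 * (s:ℂ)))).im ∂(R.muS)
          = (∫ s, (starRingEnd ℂ z) * ((s:ℂ) / (1 + a2 * (s:ℂ))) ∂(R.muS)).im
        from integral_im (hgSi.const_mul _), hstar2']
      simp [Complex.mul_im, Complex.ofReal_re, Complex.ofReal_im]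
    have h2 : ∫ s, ((starRingEnd ℂ z) * ((s:ℂ) / (1 + a2 * (s:ℂ)))).im ∂(R.muS)
        = -(z.im * J2 + (z * a2).im * I2) := by
      rw [show -(z.im * J2 + (z * a2).im * I2)
          = ∫ s, -(z.im * (s / Complex.normSq (1 + a2 * (s:ℂ)))
              + (z * a2).im * (s ^ 2 / Complex.normSq (1 + a2 * (s:ℂ)))) ∂(R.muS) from ?_]
      · exact integral_congr_ae (Filter.Eventually.of_forall fun s => im_conj_gS z a2 s)
      · rw [integral_neg, integral_add (hJSi.const_mul _) (hISi.const_mul _),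
          integral_const_mul, integral_const_mul, hI2_def, hJ2_def]
    rw [h2] at h1
    linarith [h1]
  -- J2 is strictly positive
  set c : ℝ := l / (1 + ‖a2‖ * u) ^ 2 with hc_def
  have hden : (0:ℝ) < (1 + ‖a2‖ * u) ^ 2 := by positivity
  have hc : 0 < c := div_pos hl hden
  have hJ2c : c ≤ J2 := by
    rw [hJ2_def, ← show ∫ _, c ∂(R.muS) = c from by
      rw [integral_const, probReal_univ, one_smul]]
    refine integral_mono_ae (integrable_const c) hJSi (hSae.mono fun s hs => ?_)
    have habsle : ‖1 + a2 * (s:ℂ)‖ ≤ 1 + ‖a2‖ * u := by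
      calc ‖1 + a2 * (s:ℂ)‖
          ≤ ‖(1:ℂ)‖ + ‖a2 * (s:ℂ)‖ := norm_add_le _ _
        _ = 1 + ‖a2‖ * |s| := by
            rw [norm_one, norm_mul, Complex.norm_real, Real.norm_eq_abs]
        _ ≤ 1 + ‖a2‖ * u := by
            have := mul_le_mul_of_nonneg_left (hsabs s hs) (norm_nonneg a2)
            linarith [this]
    have hnqle : Complex.normSq (1 + a2 * (s:ℂ)) ≤ (1 + ‖a2‖ * u) ^ 2 := by
      rw [← Complex.sq_norm]
      exact pow_le_pow_left₀ (norm_nonneg _) habsle 2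
    have hnqpos : 0 < Complex.normSq (1 + a2 * (s:ℂ)) :=
      Complex.normSq_pos.mpr (hd2 s (hs0 s hs))
    exact div_le_div₀ (hs0 s hs) hs.1 hnqpos hnqle
  have hJ2pos : 0 < z.im * J2 := mul_pos hη (lt_of_lt_of_le hc hJ2c)
  -- the main inequality
  have hmain : I1 * I2 < R.delta * Complex.normSq z := by
    rw [hyI1] at hKey
    nlinarith [hJ2pos, hx, hKey]
  -- Cauchy-Schwarz bounds
  have hCS1 : Complex.normSq z * Complex.normSq a2 ≤ I1 := by
    have h1 : ‖∫ t, (t:ℂ) / (1 + a1 * (t:ℂ)) ∂(R.muT)‖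
        ≤ ∫ t, ‖(t:ℂ) / (1 + a1 * (t:ℂ))‖ ∂(R.muT) := norm_integral_le_integral_norm _
    have hInt2 : Integrable (fun t : ℝ => ‖(t:ℂ) / (1 + a1 * (t:ℂ))‖ ^ 2) R.muT := by
      have : (fun t : ℝ => ‖(t:ℂ) / (1 + a1 * (t:ℂ))‖ ^ 2)
          = fun t : ℝ => t ^ 2 / Complex.normSq (1 + a1 * (t:ℂ)) := by
        funext t; exact norm_gS_sq a1 t
      rw [this]; exact hITi
    have h2 : (∫ t, ‖(t:ℂ) / (1 + a1 * (t:ℂ))‖ ∂(R.muT)) ^ 2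
        ≤ ∫ t, ‖(t:ℂ) / (1 + a1 * (t:ℂ))‖ ^ 2 ∂(R.muT) :=
      sq_integral_le hgTi.norm hInt2
    have h3 : ∫ t, ‖(t:ℂ) / (1 + a1 * (t:ℂ))‖ ^ 2 ∂(R.muT) = I1 := by
      rw [hI1_def]
      exact integral_congr_ae (Filter.Eventually.of_forall fun t => norm_gS_sq a1 t)
    have h4 : ‖∫ t, (t:ℂ) / (1 + a1 * (t:ℂ)) ∂(R.muT)‖ ^ 2 = Complex.normSq z * Complex.normSq a2 := by
      rw [hstar1]
      rw [Complex.sq_norm, Complex.normSq_neg, Complex.normSq_mul]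
    calc Complex.normSq z * Complex.normSq a2
        = ‖∫ t, (t:ℂ) / (1 + a1 * (t:ℂ)) ∂(R.muT)‖ ^ 2 := h4.symm
      _ ≤ (∫ t, ‖(t:ℂ) / (1 + a1 * (t:ℂ))‖ ∂(R.muT)) ^ 2 :=
          pow_le_pow_left₀ (norm_nonneg _) h1 2
      _ ≤ ∫ t, ‖(t:ℂ) / (1 + a1 * (t:ℂ))‖ ^ 2 ∂(R.muT) := h2
      _ = I1 := h3
  have hCS2 : R.delta ^ 2 * Complex.normSq z * Complex.normSq a1 ≤ I2 := by
    have h1 : ‖∫ s, (s:ℂ) / (1 + a2 * (s:ℂ)) ∂(R.muS)‖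
        ≤ ∫ s, ‖(s:ℂ) / (1 + a2 * (s:ℂ))‖ ∂(R.muS) := norm_integral_le_integral_norm _
    have hInt2 : Integrable (fun s : ℝ => ‖(s:ℂ) / (1 + a2 * (s:ℂ))‖ ^ 2) R.muS := by
      have : (fun s : ℝ => ‖(s:ℂ) / (1 + a2 * (s:ℂ))‖ ^ 2)
          = fun s : ℝ => s ^ 2 / Complex.normSq (1 + a2 * (s:ℂ)) := by
        funext s; exact norm_gS_sq a2 s
      rw [this]; exact hISi
    have h2 : (∫ s, ‖(s:ℂ) / (1 + a2 * (s:ℂ))‖ ∂(R.muS)) ^ 2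
        ≤ ∫ s, ‖(s:ℂ) / (1 + a2 * (s:ℂ))‖ ^ 2 ∂(R.muS) :=
      sq_integral_le hgSi.norm hInt2
    have h3 : ∫ s, ‖(s:ℂ) / (1 + a2 * (s:ℂ))‖ ^ 2 ∂(R.muS) = I2 := by
      rw [hI2_def]
      exact integral_congr_ae (Filter.Eventually.of_forall fun s => norm_gS_sq a2 s)
    have h4 : ‖∫ s, (s:ℂ) / (1 + a2 * (s:ℂ)) ∂(R.muS)‖ ^ 2
        = R.delta ^ 2 * Complex.normSq z * Complex.normSq a1 := by
      rw [hstar2]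
      rw [Complex.sq_norm, Complex.normSq_neg, Complex.normSq_mul,
        Complex.normSq_mul, Complex.normSq_ofReal]
      ring
    calc R.delta ^ 2 * Complex.normSq z * Complex.normSq a1
        = ‖∫ s, (s:ℂ) / (1 + a2 * (s:ℂ)) ∂(R.muS)‖ ^ 2 := h4.symm
      _ ≤ (∫ s, ‖(s:ℂ) / (1 + a2 * (s:ℂ))‖ ∂(R.muS)) ^ 2 :=
          pow_le_pow_left₀ (norm_nonneg _) h1 2
      _ ≤ ∫ s, ‖(s:ℂ) / (1 + a2 * (s:ℂ))‖ ^ 2 ∂(R.muS) := h2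
      _ = I2 := h3
  -- conclusions
  have hpos : 0 < R.delta * Complex.normSq z := mul_pos hδ hnqz
  have goal1 : (1 / (R.delta * Complex.normSq z)) * I1 * I2 < 1 := by
    have hrw : (1 / (R.delta * Complex.normSq z)) * I1 * I2
        = (I1 * I2) / (R.delta * Complex.normSq z) := by ring
    rw [hrw, div_lt_one hpos]; exact hmain
  have goal2 : Complex.normSq a1 * I1 < 1 / R.delta := by
    rw [lt_div_iff₀ hδ]
    nlinarith [mul_le_mul_of_nonneg_right hCS2 hI1nn, hmain, hpos,
      Complex.normSq_nonneg a1, hI1nn]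
  have goal3 : Complex.normSq a2 * I2 < R.delta := by
    nlinarith [mul_le_mul_of_nonneg_right hCS1 hI2nn, hmain, hnqz,
      Complex.normSq_nonneg a2, hI2nn]
  refine ⟨goal1, goal2, goal3, ?_⟩
  have he3' : z * a + 1 = -((R.delta:ℂ) * z * a1 * a2) := by linear_combination -e3
  have h4 : Complex.normSq (z * a + 1) ≤ R.delta := by
    rw [he3', Complex.normSq_neg, Complex.normSq_mul, Complex.normSq_mul,
      Complex.normSq_mul, Complex.normSq_ofReal]
    nlinarith [mul_le_mul_of_nonneg_right hCS2 (Complex.normSq_nonneg a2), goal3,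
      Complex.normSq_nonneg a2, Complex.normSq_nonneg a1, hI2nn]
  rw [Complex.norm_def]
  exact Real.sqrt_le_sqrt h4


end SpecGLM
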